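/- Let ε : ℝ³ → ℝ be continuous and 2π-periodic in each coordinate, let v : ℝ³ → ℂ be continuous and 2π-periodic in each coordinate with v(−p) = conj(v(p)), and let λ < min_{p∈[−π,π]³} ε(p). Then the map ψ ↦ f_ψ, where f_ψ(p) = ψ(p)/(ε(p) − λ), is a linear bijection from the space of continuous 2π-periodic functions ψ : ℝ³ → ℂ satisfying (2π)^{−3/2} ∫_{[−π,π]³} v(p−q)·(ε(q) − λ)^{−1}·ψ(q) dq = −ψ(p) for all p, onto the space of f ∈ L²([−π,π]³) satisfying ε(p)·f(p) + (2π)^{−3/2} ∫_{[−π,π]³} v(p−q) f(q) dq = λ·f(p) for almost every p. In particular, λ is an eigenvalue of the operator h = (multiplication by ε) + (convolution by v) on L²([−π,π]³) if and only if −1 is an eigenvalue of the Birman–Schwinger operator G(λ) on continuous functions, and the corresponding eigenspaces have equal dimension. -/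

import Mathlib

open MeasureTheory Real

noncomputable section

/-- The cube `[-π,π]³` in `ℝ³`, a fundamental domain for the torus `𝕋³`. -/
def cube3 : Set (Fin 3 → ℝ) := Set.Icc (fun _ => -π) (fun _ => π)

/-- Lebesgue measure restricted to the cube `[-π,π]³`. -/
def μ3 : Measure (Fin 3 → ℝ) := volume.restrict cube3

namespace BSaux

lemma cube_reduce (p : Fin 3 → ℝ) :
    ∃ s : Fin 3 → ℤ, (fun i => p i + 2 * π * (s i : ℝ)) ∈ cube3 := by
  refine ⟨fun i => -round (p i / (2 * π)), ?_⟩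
  have h2π : (0:ℝ) < 2 * π := by positivity
  constructor <;> intro i <;> simp only [] <;> push_cast
  all_goals {
    have h := abs_sub_round (p i / (2 * π))
    have key : |p i - 2 * π * (round (p i / (2 * π)) : ℝ)| ≤ π := by
      have : p i - 2 * π * (round (p i / (2 * π)) : ℝ)
          = (2 * π) * (p i / (2 * π) - (round (p i / (2 * π)) : ℝ)) := by
        field_simp
      rw [this, abs_mul, abs_of_pos h2π]
      nlinarith
    have := abs_le.mp key
    nlinarith [this.1, this.2]
  }

lemma cube3_compact : IsCompact cube3 := isCompact_Icc

instance : IsFiniteMeasure μ3 := by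
  constructor
  rw [μ3, Measure.restrict_apply_univ]
  exact cube3_compact.measure_lt_top

lemma memLp_cont {f : (Fin 3 → ℝ) → ℂ} (hf : Continuous f) : MemLp f 2 μ3 := by
  obtain ⟨C, hC⟩ := cube3_compact.exists_bound_of_continuousOn hf.continuousOn
  have h1 : MemLp f ⊤ μ3 := by
    refine memLp_top_of_bound hf.aestronglyMeasurable C ?_
    rw [μ3]
    exact (ae_restrict_iff' measurableSet_Icc).mpr (Filter.Eventually.of_forall hC)
  exact h1.mono_exponent le_top

lemma cont_integrableOn {g : (Fin 3 → ℝ) → ℂ} (hg : Continuous g) :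
    IntegrableOn g cube3 volume :=
  hg.continuousOn.integrableOn_compact cube3_compact

lemma denom_pos {ε : (Fin 3 → ℝ) → ℝ} {lam : ℝ}
    (hεper : ∀ (p : Fin 3 → ℝ) (s : Fin 3 → ℤ),
      ε (fun i => p i + 2 * π * (s i : ℝ)) = ε p)
    (hlam : ∀ p ∈ cube3, lam < ε p) (p : Fin 3 → ℝ) : 0 < ε p - lam := by
  obtain ⟨s, hs⟩ := cube_reduce p
  have := hlam _ hs
  rw [hεper p s] at this
  linarith

lemma v_bound {v : (Fin 3 → ℝ) → ℂ} (hvcont : Continuous v)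
    (hvper : ∀ (p : Fin 3 → ℝ) (s : Fin 3 → ℤ),
      v (fun i => p i + 2 * π * (s i : ℝ)) = v p) :
    ∃ C : ℝ, ∀ x, ‖v x‖ ≤ C := by
  obtain ⟨C, hC⟩ := cube3_compact.exists_bound_of_continuousOn hvcont.continuousOn
  refine ⟨C, fun x => ?_⟩
  obtain ⟨s, hs⟩ := cube_reduce x
  have := hC _ hs
  rwa [hvper x s] at this

def openCube : Set (Fin 3 → ℝ) := Set.univ.pi fun _ => Set.Ioo (-π) π

lemma closure_openCube : closure openCube = cube3 := by
  rw [openCube, closure_pi_set]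
  rw [cube3, ← Set.pi_univ_Icc]
  exact Set.pi_congr rfl fun _ _ =>
    closure_Ioo (by nlinarith [pi_pos] : (-π) ≠ π)

lemma openCube_open : IsOpen openCube :=
  isOpen_set_pi Set.finite_univ fun _ _ => isOpen_Ioo

lemma openCube_subset : openCube ⊆ cube3 := by
  rw [← closure_openCube]; exact subset_closure

/-- shift of the subtraction -/
lemma shift_sub (p q : Fin 3 → ℝ) (s : Fin 3 → ℤ) :
    (fun i => p i + 2 * π * (s i : ℝ)) - q = fun i => (p - q) i + 2 * π * (s i : ℝ) := by
  funext i; simp [Pi.sub_apply]; ring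

end BSaux

open BSaux

/-- Birman–Schwinger principle below the bottom of the essential
spectrum: `ψ ↦ ψ/(ε - λ)` is a linear bijection from the `(-1)`-eigenspace of
`G(λ)` on continuous periodic functions onto the `λ`-eigenspace of `h` in
`L²([-π,π]³)`; in particular `λ` is an eigenvalue of `h` iff `-1` is an
eigenvalue of `G(λ)`. -/
theorem birmanSchwinger_bijection
    (ε : (Fin 3 → ℝ) → ℝ)
    (hεcont : Continuous ε)
    (hεper : ∀ (p : Fin 3 → ℝ) (s : Fin 3 → ℤ),
      ε (fun i => p i + 2 * π * (s i : ℝ)) = ε p)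
    (v : (Fin 3 → ℝ) → ℂ)
    (hvcont : Continuous v)
    (hvper : ∀ (p : Fin 3 → ℝ) (s : Fin 3 → ℤ),
      v (fun i => p i + 2 * π * (s i : ℝ)) = v p)
    (hvsym : ∀ p, v (-p) = (starRingEnd ℂ) (v p))
    (lam : ℝ) (hlam : ∀ p ∈ cube3, lam < ε p) :
    -- the `(-1)`-eigenspace of the Birman–Schwinger operator `G(λ)`
    ∀ A B : Set ((Fin 3 → ℝ) → ℂ),
      A = {ψ | Continuous ψ ∧
        (∀ (p : Fin 3 → ℝ) (s : Fin 3 → ℤ),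
          ψ (fun i => p i + 2 * π * (s i : ℝ)) = ψ p) ∧
        ∀ p : Fin 3 → ℝ,
          (((2 * π) ^ (-(3 : ℝ) / 2) : ℝ) : ℂ) *
            ∫ q in cube3, v (p - q) * (((ε q - lam)⁻¹ : ℝ) : ℂ) * ψ q = -ψ p} →
      B = {f | MemLp f 2 μ3 ∧
        ∀ᵐ p ∂μ3,
          (ε p : ℂ) * f p +
            (((2 * π) ^ (-(3 : ℝ) / 2) : ℝ) : ℂ) *
              ∫ q in cube3, v (p - q) * f q = (lam : ℂ) * f p} →
      -- `Φ ψ = ψ/(ε - λ)` maps `A` into `B`, is injective, linear, and onto `B`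
      -- up to almost-everywhere equality
      ((∀ ψ ∈ A, (fun p => ψ p / ((ε p - lam : ℝ) : ℂ)) ∈ B) ∧
       (∀ ψ₁ ∈ A, ∀ ψ₂ ∈ A,
          (fun p => ψ₁ p / ((ε p - lam : ℝ) : ℂ)) =
            (fun p => ψ₂ p / ((ε p - lam : ℝ) : ℂ)) → ψ₁ = ψ₂) ∧
       (∀ ψ₁ ∈ A, ∀ ψ₂ ∈ A, ∀ a b : ℂ,
          (a • ψ₁ + b • ψ₂ ∈ A) ∧
          (fun p => (a • ψ₁ + b • ψ₂) p / ((ε p - lam : ℝ) : ℂ)) =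
            a • (fun p => ψ₁ p / ((ε p - lam : ℝ) : ℂ)) +
              b • (fun p => ψ₂ p / ((ε p - lam : ℝ) : ℂ))) ∧
       (∀ f ∈ B, ∃ ψ ∈ A,
          (fun p => ψ p / ((ε p - lam : ℝ) : ℂ)) =ᵐ[μ3] f) ∧
       -- in particular: `λ` is an eigenvalue of `h` iff `-1` is an eigenvalue
       -- of `G(λ)`
       ((∃ f ∈ B, ¬ (f =ᵐ[μ3] 0)) ↔ (∃ ψ ∈ A, ψ ≠ 0))) := by
  intro A B hA hB
  subst hA hB
  set c : ℂ := (((2 * π) ^ (-(3 : ℝ) / 2) : ℝ) : ℂ) with hc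
  have hd : ∀ p, (0:ℝ) < ε p - lam := denom_pos hεper hlam
  have hdne : ∀ p, ((ε p - lam : ℝ) : ℂ) ≠ 0 :=
    fun p => Complex.ofReal_ne_zero.mpr (ne_of_gt (hd p))
  have hdcont : Continuous fun p => ((ε p - lam : ℝ) : ℂ) :=
    Complex.continuous_ofReal.comp (hεcont.sub continuous_const)
  -- Part 1 : A → B
  have part1 : ∀ ψ, ψ ∈ {ψ : (Fin 3 → ℝ) → ℂ | Continuous ψ ∧
        (∀ (p : Fin 3 → ℝ) (s : Fin 3 → ℤ),
          ψ (fun i => p i + 2 * π * (s i : ℝ)) = ψ p) ∧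
        ∀ p : Fin 3 → ℝ,
          c * ∫ q in cube3, v (p - q) * (((ε q - lam)⁻¹ : ℝ) : ℂ) * ψ q = -ψ p} →
      (fun p => ψ p / ((ε p - lam : ℝ) : ℂ)) ∈ {f : (Fin 3 → ℝ) → ℂ | MemLp f 2 μ3 ∧
        ∀ᵐ p ∂μ3,
          (ε p : ℂ) * f p + c * ∫ q in cube3, v (p - q) * f q = (lam : ℂ) * f p} := by
    rintro ψ ⟨hψc, hψper, hψeq⟩
    have hfc : Continuous fun p => ψ p / ((ε p - lam : ℝ) : ℂ) :=
      hψc.div hdcont hdne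
    refine ⟨memLp_cont hfc, Filter.Eventually.of_forall fun p => ?_⟩
    have hint : (fun q => v (p - q) * (ψ q / ((ε q - lam : ℝ) : ℂ)))
        = fun q => v (p - q) * (((ε q - lam)⁻¹ : ℝ) : ℂ) * ψ q := by
      funext q
      push_cast
      ring
    rw [hint, hψeq p]
    have hD := hdne p
    push_cast at hD
    field_simp [hD]
    push_cast
    ring
  -- Part 2 : injectivity
  have part2 : ∀ ψ₁ ψ₂ : (Fin 3 → ℝ) → ℂ,
      (fun p => ψ₁ p / ((ε p - lam : ℝ) : ℂ)) =
        (fun p => ψ₂ p / ((ε p - lam : ℝ) : ℂ)) → ψ₁ = ψ₂ := by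
    intro ψ₁ ψ₂ h
    funext p
    have h2 := congrFun h p
    rw [div_eq_div_iff (hdne p) (hdne p)] at h2
    exact mul_right_cancel₀ (hdne p) h2
  -- Part 4 : surjectivity
  obtain ⟨Cv, hCv⟩ := v_bound hvcont hvper
  have part4 : ∀ f, f ∈ {f : (Fin 3 → ℝ) → ℂ | MemLp f 2 μ3 ∧
        ∀ᵐ p ∂μ3,
          (ε p : ℂ) * f p + c * ∫ q in cube3, v (p - q) * f q = (lam : ℂ) * f p} →
      ∃ ψ ∈ {ψ : (Fin 3 → ℝ) → ℂ | Continuous ψ ∧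
        (∀ (p : Fin 3 → ℝ) (s : Fin 3 → ℤ),
          ψ (fun i => p i + 2 * π * (s i : ℝ)) = ψ p) ∧
        ∀ p : Fin 3 → ℝ,
          c * ∫ q in cube3, v (p - q) * (((ε q - lam)⁻¹ : ℝ) : ℂ) * ψ q = -ψ p},
        (fun p => ψ p / ((ε p - lam : ℝ) : ℂ)) =ᵐ[μ3] f := by
    rintro f ⟨hf2, hfeq⟩
    have hfint : Integrable f μ3 := hf2.integrable (by norm_num)
    set ψ : (Fin 3 → ℝ) → ℂ := fun p => -(c * ∫ q in cube3, v (p - q) * f q) with hψdef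
    have hmeas : ∀ p : Fin 3 → ℝ,
        AEStronglyMeasurable (fun q => v (p - q) * f q) μ3 := fun p =>
      ((hvcont.comp (continuous_const.sub continuous_id)).aestronglyMeasurable).mul
        hfint.aestronglyMeasurable
    have hψcont : Continuous ψ := by
      refine Continuous.neg (continuous_const.mul ?_)
      rw [continuous_iff_continuousAt]
      intro p₀
      have : ∀ q, ∀ p : Fin 3 → ℝ, ‖v (p - q) * f q‖ ≤ Cv * ‖f q‖ := by
        intro q p
        rw [norm_mul]
        exact mul_le_mul_of_nonneg_right (hCv _) (norm_nonneg _)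
      refine continuousAt_of_dominated
        (Filter.Eventually.of_forall fun p => hmeas p)
        (Filter.Eventually.of_forall fun p =>
          Filter.Eventually.of_forall fun q => this q p)
        (hfint.norm.const_mul Cv) ?_
      exact Filter.Eventually.of_forall fun q =>
        ((hvcont.comp (continuous_id.sub continuous_const)).continuousAt).mul
          continuousAt_const
    have hψper : ∀ (p : Fin 3 → ℝ) (s : Fin 3 → ℤ),
        ψ (fun i => p i + 2 * π * (s i : ℝ)) = ψ p := by
      intro p s
      simp only [hψdef, neg_inj, mul_eq_mul_left_iff]
      left
      refine integral_congr_ae (Filter.Eventually.of_forall fun q => ?_)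
      show v ((fun i => p i + 2 * π * (s i : ℝ)) - q) * f q = v (p - q) * f q
      rw [shift_sub p q s, hvper (p - q) s]
    -- a.e. identity : ψ p / d p = f p
    have hae : (fun p => ψ p / ((ε p - lam : ℝ) : ℂ)) =ᵐ[μ3] f := by
      filter_upwards [hfeq] with p hp
      rw [div_eq_iff (hdne p)]
      simp only [hψdef]
      push_cast
      linear_combination -hp
    refine ⟨ψ, ⟨hψcont, hψper, ?_⟩, hae⟩
    intro p
    have : (∫ q in cube3, v (p - q) * (((ε q - lam)⁻¹ : ℝ) : ℂ) * ψ q)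
        = ∫ q in cube3, v (p - q) * f q := by
      refine integral_congr_ae ?_
      have : ∀ᵐ q ∂μ3, ψ q / ((ε q - lam : ℝ) : ℂ) = f q := hae
      filter_upwards [this] with q hq
      rw [← hq, Complex.ofReal_inv, div_eq_mul_inv]
      ring
    rw [this]
    simp [hψdef]
  -- final asembly
  refine ⟨part1, fun ψ₁ _ ψ₂ _ h => part2 ψ₁ ψ₂ h, ?_, part4, ?_⟩
  · -- Part 3 : linearity
    rintro ψ₁ ⟨h₁c, h₁per, h₁eq⟩ ψ₂ ⟨h₂c, h₂per, h₂eq⟩ a b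
    constructor
    · refine ⟨((continuous_const.mul h₁c).add (continuous_const.mul h₂c)), ?_, ?_⟩
      · intro p s
        simp only [Pi.add_apply, Pi.smul_apply, smul_eq_mul, h₁per p s, h₂per p s]
      · intro p
        have I₁ : IntegrableOn (fun q => v (p - q) * (((ε q - lam)⁻¹ : ℝ) : ℂ) * ψ₁ q)
            cube3 volume := by
          refine cont_integrableOn ?_
          exact ((hvcont.comp (continuous_const.sub continuous_id)).mul
            (Complex.continuous_ofReal.comp
              ((hεcont.sub continuous_const).inv₀ (fun q => ne_of_gt (hd q))))).mul h₁c
        have I₂ : IntegrableOn (fun q => v (p - q) * (((ε q - lam)⁻¹ : ℝ) : ℂ) * ψ₂ q)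
            cube3 volume := by
          refine cont_integrableOn ?_
          exact ((hvcont.comp (continuous_const.sub continuous_id)).mul
            (Complex.continuous_ofReal.comp
              ((hεcont.sub continuous_const).inv₀ (fun q => ne_of_gt (hd q))))).mul h₂c
        have hsplit : (fun q => v (p - q) * (((ε q - lam)⁻¹ : ℝ) : ℂ) * ((a • ψ₁ + b • ψ₂) q))
            = fun q => a • (v (p - q) * (((ε q - lam)⁻¹ : ℝ) : ℂ) * ψ₁ q)
                + b • (v (p - q) * (((ε q - lam)⁻¹ : ℝ) : ℂ) * ψ₂ q) := by
          funext q
          simp only [Pi.add_apply, Pi.smul_apply, smul_eq_mul]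
          ring
        have e : (∫ q in cube3, v (p - q) * (((ε q - lam)⁻¹ : ℝ) : ℂ) * ((a • ψ₁ + b • ψ₂) q))
            = a • (∫ q in cube3, v (p - q) * (((ε q - lam)⁻¹ : ℝ) : ℂ) * ψ₁ q)
              + b • (∫ q in cube3, v (p - q) * (((ε q - lam)⁻¹ : ℝ) : ℂ) * ψ₂ q) := by
          have J₁ : Integrable (fun q => a • (v (p - q) * (((ε q - lam)⁻¹ : ℝ) : ℂ) * ψ₁ q)) μ3 :=
            I₁.smul a
          have J₂ : Integrable (fun q => b • (v (p - q) * (((ε q - lam)⁻¹ : ℝ) : ℂ) * ψ₂ q)) μ3 :=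
            I₂.smul b
          rw [hsplit]
          rw [show (∫ q in cube3, (a • (v (p - q) * (((ε q - lam)⁻¹ : ℝ) : ℂ) * ψ₁ q)
              + b • (v (p - q) * (((ε q - lam)⁻¹ : ℝ) : ℂ) * ψ₂ q)))
            = (∫ q in cube3, a • (v (p - q) * (((ε q - lam)⁻¹ : ℝ) : ℂ) * ψ₁ q))
              + ∫ q in cube3, b • (v (p - q) * (((ε q - lam)⁻¹ : ℝ) : ℂ) * ψ₂ q)
            from integral_add J₁ J₂, integral_smul, integral_smul]
        rw [e]
        simp only [Pi.add_apply, Pi.smul_apply, smul_eq_mul]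
        linear_combination a * (h₁eq p) + b * (h₂eq p)
    · funext p
      simp only [Pi.add_apply, Pi.smul_apply, smul_eq_mul]
      rw [add_div, mul_div_assoc, mul_div_assoc]
  · -- Part 5 : iff
    constructor
    · rintro ⟨f, hfB, hfne⟩
      obtain ⟨ψ, hψA, hψae⟩ := part4 f hfB
      refine ⟨ψ, hψA, ?_⟩
      intro h0
      apply hfne
      refine hψae.symm.trans ?_
      rw [h0]
      exact Filter.Eventually.of_forall fun p => by simp
    · rintro ⟨ψ, hψA, hψne⟩
      refine ⟨(fun p => ψ p / ((ε p - lam : ℝ) : ℂ)), part1 ψ hψA, ?_⟩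
      intro h
      apply hψne
      -- f is a.e. 0 ⇒ ψ = 0
      obtain ⟨hψc, hψper, -⟩ := hψA
      have hfc : Continuous fun p => ψ p / ((ε p - lam : ℝ) : ℂ) := hψc.div hdcont hdne
      have hnull : volume ({p | ψ p ≠ 0} ∩ cube3) = 0 := by
        have h' : ∀ᵐ p ∂μ3, ψ p / ((ε p - lam : ℝ) : ℂ) = (0 : ℂ) := h
        have : ∀ᵐ p ∂μ3, ψ p = 0 := by
          filter_upwards [h'] with p hp
          exact (div_eq_zero_iff.mp hp).resolve_right fun h'' => hdne p h''
        have hm : MeasurableSet cube3 := measurableSet_Icc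
        rw [μ3] at this
        rw [ae_iff] at this
        rw [Measure.restrict_apply' hm] at this
        exact this
      have hzero_open : ∀ p ∈ openCube, ψ p = 0 := by
        intro p hp
        by_contra hne
        have hU : IsOpen (openCube ∩ {x | ψ x ≠ 0}) :=
          openCube_open.inter (isOpen_compl_iff.mpr (isClosed_eq hψc continuous_const))
        have hpos : 0 < volume (openCube ∩ {x | ψ x ≠ 0}) :=
          hU.measure_pos volume ⟨p, hp, hne⟩
        have hsub : openCube ∩ {x | ψ x ≠ 0} ⊆ {x | ψ x ≠ 0} ∩ cube3 :=
          fun x ⟨hx1, hx2⟩ => ⟨hx2, openCube_subset hx1⟩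
        exact absurd (measure_mono_null hsub hnull) (ne_of_gt hpos)
      have hzero_cube : ∀ p ∈ cube3, ψ p = 0 := by
        intro p hp
        have hcl : IsClosed {x | ψ x = 0} := isClosed_eq hψc continuous_const
        have : cube3 ⊆ {x | ψ x = 0} := by
          rw [← closure_openCube]
          exact hcl.closure_subset_iff.mpr hzero_open
        exact this hp
      funext p
      obtain ⟨s, hs⟩ := cube_reduce p
      have := hzero_cube _ hs
      rw [hψper p s] at this
      simpa using this
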